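/- Let K be a number field, m, n ⊆ K full lattices, and let γ = [[a,b],[c,d]] ∈ GL₂(K) satisfy (m⊕n)·γ = m⊕n (right action on row vectors). Then: (i) det(γ) ∈ O_K^×; (ii) a·m ⊆ m, d·n ⊆ n, b·m ⊆ n, and c·n ⊆ m. -/

import Mathlib

/-- `L` is a full lattice in the number field `K`. -/
def IsFullLattice (K : Type*) [Field K] [NumberField K] (L : Submodule ℤ K) : Prop :=
  L.FG ∧ Submodule.span ℚ (L : Set K) = ⊤

lemma isIntegral_of_mul_mem_full (K : Type*) [Field K] [NumberField K]
    (L : Submodule ℤ K) (hL : IsFullLattice K L) (x : K)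
    (hx : ∀ y ∈ L, x * y ∈ L) : IsIntegral ℤ x := by
  have hne : L ≠ ⊥ := by
    intro h
    rw [h] at hL
    have := hL.2
    simp only [Submodule.bot_coe] at this
    rw [Submodule.span_zero_singleton] at this
    exact absurd (this ▸ Submodule.mem_top (x := (1 : K))) (by simp)
  exact isIntegral_of_smul_mem_submodule L hne hL.1 x (by simpa [smul_eq_mul] using hx)

/-- If `γ = [[a,b],[c,d]] ∈ GL₂(K)` stabilizes `m⊕n` under the right action on row
vectors, then (i) `det γ = ad−bc` is a unit of `O_K`, and (ii) `a·m ⊆ m`, `d·n ⊆ n`,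
`b·m ⊆ n` and `c·n ⊆ m`. -/
theorem stabilizer_entries (K : Type*) [Field K] [NumberField K]
    (m n : Submodule ℤ K) (hm : IsFullLattice K m) (hn : IsFullLattice K n)
    (a b c d : K) (hdet : a * d - b * c ≠ 0)
    (hstab : (fun v : Fin 2 → K => Matrix.vecMul v !![a, b; c, d]) ''
        {v : Fin 2 → K | v 0 ∈ m ∧ v 1 ∈ n}
      = {v : Fin 2 → K | v 0 ∈ m ∧ v 1 ∈ n}) :
    (a * d - b * c ∈ integralClosure ℤ K ∧
      ∃ u ∈ integralClosure ℤ K, (a * d - b * c) * u = 1) ∧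
    (∀ x ∈ m, a * x ∈ m) ∧ (∀ y ∈ n, d * y ∈ n) ∧
    (∀ x ∈ m, b * x ∈ n) ∧ (∀ y ∈ n, c * y ∈ m) := by
  set Δ := a * d - b * c with hΔ
  -- forward direction: for x ∈ m, y ∈ n, x*a + y*c ∈ m and x*b + y*d ∈ n
  have fwd : ∀ x ∈ m, ∀ y ∈ n, x * a + y * c ∈ m ∧ x * b + y * d ∈ n := by
    intro x hx y hy
    have : (fun v : Fin 2 → K => Matrix.vecMul v !![a, b; c, d]) ![x, y] ∈
        {v : Fin 2 → K | v 0 ∈ m ∧ v 1 ∈ n} := by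
      rw [← hstab]
      exact Set.mem_image_of_mem _ ⟨by simpa using hx, by simpa using hy⟩
    simpa [Matrix.vecMul, Matrix.vecHead, Matrix.vecTail, Fin.sum_univ_two,
      dotProduct] using this
  have ha : ∀ x ∈ m, a * x ∈ m := fun x hx => by
    have := (fwd x hx 0 n.zero_mem).1; simpa [mul_comm] using this
  have hb : ∀ x ∈ m, b * x ∈ n := fun x hx => by
    have := (fwd x hx 0 n.zero_mem).2; simpa [mul_comm] using this
  have hc : ∀ y ∈ n, c * y ∈ m := fun y hy => by
    have := (fwd 0 m.zero_mem y hy).1; simpa [mul_comm] using this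
  have hd : ∀ y ∈ n, d * y ∈ n := fun y hy => by
    have := (fwd 0 m.zero_mem y hy).2; simpa [mul_comm] using this
  -- backward direction
  have bwd : ∀ x ∈ m, ∀ y ∈ n, (d * x - c * y) / Δ ∈ m ∧ (a * y - b * x) / Δ ∈ n := by
    intro x hx y hy
    have hw : (![x, y] : Fin 2 → K) ∈ {v : Fin 2 → K | v 0 ∈ m ∧ v 1 ∈ n} := by
      exact ⟨by simpa using hx, by simpa using hy⟩
    rw [← hstab] at hw
    obtain ⟨v, ⟨hv0, hv1⟩, hv⟩ := hw
    have h0 : v 0 * a + v 1 * c = x := by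
      have := congrFun hv 0
      simpa [Matrix.vecMul, Fin.sum_univ_two, dotProduct] using this
    have h1 : v 0 * b + v 1 * d = y := by
      have := congrFun hv 1
      simpa [Matrix.vecMul, Fin.sum_univ_two, dotProduct] using this
    have e0 : (d * x - c * y) / Δ = v 0 := by
      rw [div_eq_iff hdet]
      linear_combination c * h1 - d * h0
    have e1 : (a * y - b * x) / Δ = v 1 := by
      rw [div_eq_iff hdet]
      linear_combination b * h0 - a * h1
    exact ⟨e0 ▸ hv0, e1 ▸ hv1⟩
  have hd' : ∀ x ∈ m, (d / Δ) * x ∈ m := fun x hx => by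
    have := (bwd x hx 0 n.zero_mem).1
    have e : (d * x - c * 0) / Δ = (d / Δ) * x := by ring
    rwa [e] at this
  have hb' : ∀ x ∈ m, (b / Δ) * x ∈ n := fun x hx => by
    have := (bwd x hx 0 n.zero_mem).2
    have hneg : -((a * 0 - b * x) / Δ) ∈ n := n.neg_mem this
    have e : -((a * 0 - b * x) / Δ) = (b / Δ) * x := by ring
    rwa [e] at hneg
  have hc' : ∀ y ∈ n, (c / Δ) * y ∈ m := fun y hy => by
    have := (bwd 0 m.zero_mem y hy).1
    have hneg : -((d * 0 - c * y) / Δ) ∈ m := m.neg_mem this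
    have e : -((d * 0 - c * y) / Δ) = (c / Δ) * y := by ring
    rwa [e] at hneg
  have ha' : ∀ y ∈ n, (a / Δ) * y ∈ n := fun y hy => by
    have := (bwd 0 m.zero_mem y hy).2
    have e : (a * y - b * 0) / Δ = (a / Δ) * y := by ring
    rwa [e] at this
  -- integrality
  have intA : IsIntegral ℤ a := isIntegral_of_mul_mem_full K m hm a ha
  have intD : IsIntegral ℤ d := isIntegral_of_mul_mem_full K n hn d hd
  have intBC : IsIntegral ℤ (b * c) :=
    isIntegral_of_mul_mem_full K m hm (b * c) (fun x hx => by
      have := hc (b * x) (hb x hx)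
      have e : c * (b * x) = b * c * x := by ring
      rwa [e] at this)
  have intΔ : IsIntegral ℤ Δ := (intA.mul intD).sub intBC
  have intA' : IsIntegral ℤ (a / Δ) := isIntegral_of_mul_mem_full K n hn _ ha'
  have intD' : IsIntegral ℤ (d / Δ) := isIntegral_of_mul_mem_full K m hm _ hd'
  have intBC' : IsIntegral ℤ (b * c / (Δ * Δ)) :=
    isIntegral_of_mul_mem_full K m hm _ (fun x hx => by
      have := hc' ((b / Δ) * x) (hb' x hx)
      have e : (c / Δ) * ((b / Δ) * x) = (b * c / (Δ * Δ)) * x := by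
        field_simp
      rwa [e] at this)
  have intInv : IsIntegral ℤ Δ⁻¹ := by
    have e : Δ⁻¹ = (a / Δ) * (d / Δ) - b * c / (Δ * Δ) := by
      rw [div_mul_div_comm, div_sub_div_same, ← hΔ, inv_eq_one_div]
      rw [div_eq_div_iff hdet (mul_ne_zero hdet hdet)]
      ring
    rw [e]
    exact (intA'.mul intD').sub intBC'
  refine ⟨⟨intΔ, Δ⁻¹, intInv, mul_inv_cancel₀ hdet⟩, ha, hd, hb, hc⟩
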